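/- Under the k-stage group testing strategy kSG(u1,...,uk), the expected number of tests per individual equals 1/u1 + Σ_{ℓ=1}^{k-1} (1 - (1-p)^{u_ℓ})/u_{ℓ+1}, and the expected cost per individual equals b(1 - p - (1-p)^{u_k}). -/

import Mathlib

open MeasureTheory
open scoped ENNReal

section helpers
variable (p : ℝ≥0∞) (hple : p ≤ 1) (n : ℕ)

noncomputable def kSGmu : Measure (Fin n → Bool) :=
  Measure.pi fun _ : Fin n => (PMF.bernoulli p.toNNReal (by simpa using ENNReal.toNNReal_mono ENNReal.one_ne_top hple)).toMeasure

lemma kSG_allfalse (m : ℕ) (hmn : m ≤ n) :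
    kSGmu p hple n {x | ∀ j : Fin n, (j : ℕ) < m → x j = false} = (1 - p) ^ m := by
  have hset : {x : Fin n → Bool | ∀ j : Fin n, (j : ℕ) < m → x j = false}
      = Set.pi Set.univ (fun j : Fin n => if (j : ℕ) < m then {false} else Set.univ) := by
    ext x
    simp only [Set.mem_setOf_eq, Set.mem_pi, Set.mem_univ, forall_true_left]
    constructor
    · intro h j; split <;> simp_all
    · intro h j hj; have := h j; rw [if_pos hj] at this; simpa using this
  rw [kSGmu, hset, Measure.pi_pi]
  have hb : ∀ j : Fin n, (PMF.bernoulli p.toNNReal (by simpa using ENNReal.toNNReal_mono ENNReal.one_ne_top hple)).toMeasure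
      (if (j : ℕ) < m then {false} else Set.univ) = if (j : ℕ) < m then 1 - p else 1 := by
    intro j; split
    · rw [PMF.toMeasure_apply_singleton _ _ (measurableSet_singleton _)]
      refine (PMF.bernoulli_apply _ false).trans ?_
      simp [ENNReal.coe_sub, ENNReal.coe_toNNReal (ne_top_of_le_ne_top ENNReal.one_ne_top hple)]
    · exact measure_univ
  simp_rw [hb]
  rw [Fin.prod_univ_eq_prod_range (fun i => if i < m then 1 - p else 1) n,
    ← Finset.prod_filter]
  have : (Finset.range n).filter (fun i => i < m) = Finset.range m := by
    ext i; simp only [Finset.mem_filter, Finset.mem_range]; omega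
  rw [this]
  simp

lemma kSG_exists_true (m : ℕ) (hmn : m ≤ n) :
    kSGmu p hple n {x | ∃ j : Fin n, (j : ℕ) < m ∧ x j = true} = 1 - (1 - p) ^ m := by
  have : IsProbabilityMeasure (kSGmu p hple n) := by
    rw [kSGmu]; infer_instance
  have hc : {x : Fin n → Bool | ∃ j : Fin n, (j : ℕ) < m ∧ x j = true}
      = {x | ∀ j : Fin n, (j : ℕ) < m → x j = false}ᶜ := by
    ext x; simp [Set.mem_setOf_eq]
  rw [hc, measure_compl (Set.Finite.measurableSet (Set.toFinite _)) (measure_ne_top _ _),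
    measure_univ, kSG_allfalse p hple n m hmn]
end helpers

/-- Under kSG(u 0, …, u (k-1)) with nested group sizes
(`u (ℓ+1) ∣ u ℓ`), i.i.d. Bernoulli(p) infection statuses, false-positive cost `b`
and false-negative cost `c`.  We track a fixed individual (index 0) inside one
top-level group of size `u 0`; its stage-(ℓ+1) group consists of the indices
`j < u ℓ` (wlog, by the nested structure).  The individual is declared infected iff
its stage-k group (of size `u (k-1)`) tests positive.
(i) The expected number of tests per individual is
    `1/(u 0) + ∑_{ℓ=0}^{k-2} (1-(1-p)^{u ℓ})/(u (ℓ+1))`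
    (at stage ℓ+2 the individual contributes `1/(u (ℓ+1))` tests iff its
    stage-(ℓ+1) group, of size `u ℓ`, is positive).
(ii) The expected cost per individual is `b * (1 - p - (1-p)^{u (k-1)})`. -/
theorem kSG_expected_rate_and_cost (k : ℕ) (hk : 1 ≤ k) (u : ℕ → ℕ)
    (hu : ∀ ℓ < k, 0 < u ℓ) (hdvd : ∀ ℓ, ℓ + 1 < k → u (ℓ + 1) ∣ u ℓ)
    (p : ℝ≥0∞) (hp0 : 0 < p) (hp1 : p < 1) (hple : p ≤ 1)
    (b c : ℝ≥0∞) (hb : 0 < b) (hc : 0 < c) :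
    (∫⁻ x : Fin (u 0) → Bool,
        (1 / (u 0 : ℝ≥0∞) +
          ∑ ℓ ∈ Finset.range (k - 1),
            if ∃ j : Fin (u 0), (j : ℕ) < u ℓ ∧ x j = true
            then 1 / (u (ℓ + 1) : ℝ≥0∞) else 0)
      ∂(Measure.pi fun _ : Fin (u 0) => (PMF.bernoulli p.toNNReal (by simpa using ENNReal.toNNReal_mono ENNReal.one_ne_top hple)).toMeasure))
      = 1 / (u 0 : ℝ≥0∞) +
          ∑ ℓ ∈ Finset.range (k - 1), (1 - (1 - p) ^ (u ℓ)) / (u (ℓ + 1) : ℝ≥0∞)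
    ∧
    (∫⁻ x : Fin (u 0) → Bool,
        (if x ⟨0, hu 0 (Nat.lt_of_lt_of_le Nat.zero_lt_one hk)⟩ = false ∧
            (∃ j : Fin (u 0), (j : ℕ) < u (k - 1) ∧ x j = true) then b
         else if x ⟨0, hu 0 (Nat.lt_of_lt_of_le Nat.zero_lt_one hk)⟩ = true ∧
            ¬(∃ j : Fin (u 0), (j : ℕ) < u (k - 1) ∧ x j = true) then c else 0)
      ∂(Measure.pi fun _ : Fin (u 0) => (PMF.bernoulli p.toNNReal (by simpa using ENNReal.toNNReal_mono ENNReal.one_ne_top hple)).toMeasure))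
      = b * (1 - p - (1 - p) ^ (u (k - 1))) := by
  set n := u 0 with hn
  have h0k : 0 < k := hk
  have hdvd0 : ∀ ℓ < k, u ℓ ∣ u 0 := by
    intro ℓ
    induction ℓ with
    | zero => intro _; rfl
    | succ m ih =>
      intro hm
      exact dvd_trans (hdvd m hm) (ih (by omega))
  have hle : ∀ ℓ < k, u ℓ ≤ u 0 := fun ℓ hℓ =>
    Nat.le_of_dvd (hu 0 h0k) (hdvd0 ℓ hℓ)
  set μ := Measure.pi fun _ : Fin n => (PMF.bernoulli p.toNNReal (by simpa using ENNReal.toNNReal_mono ENNReal.one_ne_top hple)).toMeasure with hμ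
  have hμeq : μ = kSGmu p hple n := rfl
  have hprob : IsProbabilityMeasure μ := by rw [hμ]; infer_instance
  have hmeas : ∀ s : Set (Fin n → Bool), MeasurableSet s := fun s =>
    (Set.Finite.subset Set.finite_univ (Set.subset_univ s)).measurableSet
  constructor
  · -- (i)
    rw [lintegral_add_left measurable_const, lintegral_const, measure_univ, mul_one]
    congr 1
    rw [lintegral_finset_sum]
    · apply Finset.sum_congr rfl
      intro ℓ hℓ
      have hℓk : ℓ < k - 1 := Finset.mem_range.mp hℓ
      have hfun : (fun x : Fin n → Bool =>
          if ∃ j : Fin n, (j : ℕ) < u ℓ ∧ x j = true then 1 / (u (ℓ + 1) : ℝ≥0∞) else 0)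
          = Set.indicator {x : Fin n → Bool | ∃ j : Fin n, (j : ℕ) < u ℓ ∧ x j = true}
              (fun _ => 1 / (u (ℓ + 1) : ℝ≥0∞)) := by
        funext x; simp [Set.indicator_apply, Set.mem_setOf_eq]
      rw [hfun, lintegral_indicator_const (hmeas _),
        hμeq, kSG_exists_true p hple n (u ℓ) (hle ℓ (by omega))]
      rw [one_div, mul_comm, ← div_eq_mul_inv]
    · intro ℓ hℓ
      exact measurable_of_countable _
  · -- (ii)
    set i0 : Fin n := ⟨0, hu 0 (Nat.lt_of_lt_of_le Nat.zero_lt_one hk)⟩ with hi0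
    set m := u (k - 1) with hm
    have hm0 : 0 < m := hu (k - 1) (by omega)
    have hmle : m ≤ n := hle (k - 1) (by omega)
    have hfun : ∀ x : Fin n → Bool,
        (if x i0 = false ∧ (∃ j : Fin n, (j : ℕ) < m ∧ x j = true) then b
         else if x i0 = true ∧ ¬(∃ j : Fin n, (j : ℕ) < m ∧ x j = true) then c else 0)
        = Set.indicator
            {x : Fin n → Bool | x i0 = false ∧ ∃ j : Fin n, (j : ℕ) < m ∧ x j = true}
            (fun _ => b) x := by
      intro x
      by_cases h1 : x i0 = false ∧ ∃ j : Fin n, (j : ℕ) < m ∧ x j = true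
      · rw [if_pos h1, Set.indicator_of_mem
          (show x ∈ {x : Fin n → Bool | x i0 = false ∧ ∃ j : Fin n, (j : ℕ) < m ∧ x j = true}
            from h1)]
      · rw [if_neg h1, Set.indicator_of_notMem
          (show x ∉ {x : Fin n → Bool | x i0 = false ∧ ∃ j : Fin n, (j : ℕ) < m ∧ x j = true}
            from h1)]
        rw [if_neg]
        rintro ⟨ht, hex⟩
        exact hex ⟨i0, hm0, ht⟩
    refine (lintegral_congr (fun x => hfun x)).trans ?_
    rw [lintegral_indicator_const (hmeas _)]
    have hsets : {x : Fin n → Bool | x i0 = false ∧ ∃ j : Fin n, (j : ℕ) < m ∧ x j = true}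
        = {x : Fin n → Bool | ∀ j : Fin n, (j : ℕ) < 1 → x j = false}
          \ {x : Fin n → Bool | ∀ j : Fin n, (j : ℕ) < m → x j = false} := by
      ext x
      simp only [Set.mem_setOf_eq, Set.mem_diff, not_forall]
      constructor
      · rintro ⟨h0, j, hj, ht⟩
        refine ⟨fun j' hj' => ?_, j, hj, by simp [ht]⟩
        have : j' = i0 := by
          apply Fin.ext; simpa using Nat.lt_one_iff.mp hj'
        rw [this]; exact h0
      · rintro ⟨h0, j, hj, ht⟩
        exact ⟨h0 i0 (by simp [hi0]), j, hj, by simpa using ht⟩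
    have hsub : {x : Fin n → Bool | ∀ j : Fin n, (j : ℕ) < m → x j = false}
        ⊆ {x : Fin n → Bool | ∀ j : Fin n, (j : ℕ) < 1 → x j = false} := by
      intro x hx j hj
      exact hx j (lt_of_lt_of_le hj hm0)
    rw [hsets, measure_diff hsub ((hmeas _).nullMeasurableSet)
      (measure_ne_top _ _), hμeq, kSG_allfalse p hple n 1 (le_trans hm0 hmle),
      kSG_allfalse p hple n m hmle, pow_one]
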